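/- arXiv:2001.04949 — 3 statements merged into one kernel-verified Lean document; each statement's English description precedes it below -/
import Mathlib

section
/- Let a > 0, b ∈ ℝ with −b ≥ 2a, and s = σ + iω ∈ ℂ with σ ≥ 0. Then the two roots λ₁ = ((s − b) + √((b − s)² − 4a²))/(2a) and λ₂ = ((s − b) − √((b − s)² − 4a²))/(2a) of the characteristic equation a y² + (b − s) y + a = 0 (where √ denotes the principal branch of the complex square root) satisfy |λ₂| ≤ 1 ≤ |λ₁|. -/
open Complex Real

lemma aux_half_ne : (1 : ℂ) / 2 ≠ 0 := by norm_num

lemma aux_sqrt_re_nonneg (z : ℂ) : 0 ≤ (z ^ ((1 : ℂ) / 2)).re := by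
  rcases eq_or_ne z 0 with rfl | hz
  · rw [Complex.zero_cpow aux_half_ne]; simp
  · rw [Complex.cpow_def_of_ne_zero hz, Complex.exp_re]
    have him : (Complex.log z * ((1 : ℂ)/2)).im = z.arg / 2 := by
      simp [Complex.mul_im, Complex.log_im]
      ring
    rw [him]
    have h1 := Complex.neg_pi_lt_arg z
    have h2 := Complex.arg_le_pi z
    have hpi := Real.pi_pos
    have hcos : 0 ≤ Real.cos (z.arg / 2) :=
      Real.cos_nonneg_of_neg_pi_div_two_le_of_le (by linarith) (by linarith)
    positivity

lemma aux_sqrt_im_nonneg (z : ℂ) (h : 0 ≤ z.im) (hz : z ≠ 0) :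
    0 ≤ (z ^ ((1 : ℂ) / 2)).im := by
  rw [Complex.cpow_def_of_ne_zero hz, Complex.exp_im]
  have him : (Complex.log z * ((1 : ℂ)/2)).im = z.arg / 2 := by
    simp [Complex.mul_im, Complex.log_im]
    ring
  rw [him]
  have h1 : 0 ≤ z.arg := Complex.arg_nonneg_iff.mpr h
  have h2 := Complex.arg_le_pi z
  have hpi := Real.pi_pos
  have hsin : 0 ≤ Real.sin (z.arg / 2) :=
    Real.sin_nonneg_of_nonneg_of_le_pi (by linarith) (by linarith)
  positivity

lemma aux_sqrt_im_nonpos (z : ℂ) (h : z.im < 0) :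
    (z ^ ((1 : ℂ) / 2)).im ≤ 0 := by
  have hz : z ≠ 0 := by intro h0; rw [h0] at h; simp at h
  rw [Complex.cpow_def_of_ne_zero hz, Complex.exp_im]
  have him : (Complex.log z * ((1 : ℂ)/2)).im = z.arg / 2 := by
    simp [Complex.mul_im, Complex.log_im]
    ring
  rw [him]
  have h1 : z.arg < 0 := Complex.arg_neg_iff.mpr h
  have h2 := Complex.neg_pi_lt_arg z
  have hpi := Real.pi_pos
  have hsin : Real.sin (z.arg / 2) ≤ 0 :=
    Real.sin_nonpos_of_nonpos_of_neg_pi_le (by linarith) (by linarith)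
  have hexp : 0 < Real.exp ((Complex.log z * ((1:ℂ)/2)).re) := Real.exp_pos _
  nlinarith

/-- For `a > 0`, `-b ≥ 2a` and `Re s ≥ 0`, the roots
`λ₁ = ((s - b) + √((b - s)² - 4a²))/(2a)` and `λ₂ = ((s - b) - √((b - s)² - 4a²))/(2a)`
of the characteristic equation `a y² + (b - s) y + a = 0` (principal complex square root)
satisfy `|λ₂| ≤ 1 ≤ |λ₁|`. -/
theorem wr_characteristic_roots_modulus (a b : ℝ) (ha : 0 < a) (hb : 2 * a ≤ -b)
    (s : ℂ) (hs : 0 ≤ s.re) :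
    ‖(((s - (b : ℂ)) - (((b : ℂ) - s) ^ 2 - 4 * (a : ℂ) ^ 2) ^ ((1 : ℂ) / 2)) /
        (2 * (a : ℂ)))‖ ≤ 1 ∧
    1 ≤ ‖(((s - (b : ℂ)) + (((b : ℂ) - s) ^ 2 - 4 * (a : ℂ) ^ 2) ^ ((1 : ℂ) / 2)) /
        (2 * (a : ℂ)))‖ := by
  have hsq : ((b : ℂ) - s) ^ 2 = (s - (b : ℂ)) ^ 2 := by ring
  rw [hsq]
  set u : ℂ := s - (b : ℂ) with hu
  set z : ℂ := u ^ 2 - 4 * (a : ℂ) ^ 2 with hzdef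
  set w : ℂ := z ^ ((1 : ℂ) / 2) with hwdef
  have hw2 : w ^ 2 = z := by
    rw [hwdef, one_div]
    exact_mod_cast Complex.cpow_ofNat_inv_pow z 2
  have hure : u.re = s.re - b := by simp [hu]
  have huim : u.im = s.im := by simp [hu]
  have hurepos : 0 < u.re := by rw [hure]; linarith
  have hzim : z.im = 2 * u.re * u.im := by
    simp [hzdef, pow_two, Complex.sub_im, Complex.mul_im]
    ring
  have hwre : 0 ≤ w.re := aux_sqrt_re_nonneg z
  have himprod : 0 ≤ u.im * w.im := by
    rcases lt_trichotomy u.im 0 with h | h | h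
    · have hz : z.im < 0 := by rw [hzim]; nlinarith
      have := aux_sqrt_im_nonpos z hz
      nlinarith
    · rw [h]; simp
    · have hz : 0 < z.im := by rw [hzim]; nlinarith
      have hz0 : z ≠ 0 := by intro h0; rw [h0] at hz; simp at hz
      have := aux_sqrt_im_nonneg z (le_of_lt hz) hz0
      nlinarith
  have ha2 : (2 : ℂ) * (a : ℂ) ≠ 0 := by
    simp only [ne_eq, mul_eq_zero, Complex.ofReal_eq_zero]
    push_neg
    exact ⟨two_ne_zero, ne_of_gt ha⟩
  have hmul : ((u + w) / (2 * (a : ℂ))) * ((u - w) / (2 * (a : ℂ))) = 1 := by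
    field_simp [Complex.ofReal_ne_zero.mpr ha.ne']
    linear_combination -hw2
  have habsmul : ‖(u + w) / (2 * (a : ℂ))‖ *
      ‖(u - w) / (2 * (a : ℂ))‖ = 1 := by
    rw [← norm_mul, hmul, norm_one]
  have habsle : ‖u - w‖ ≤ ‖u + w‖ := by
    rw [Complex.norm_def, Complex.norm_def]
    apply Real.sqrt_le_sqrt
    rw [Complex.normSq_apply, Complex.normSq_apply]
    simp only [Complex.add_re, Complex.add_im, Complex.sub_re, Complex.sub_im]
    nlinarith [mul_nonneg (le_of_lt hurepos) hwre]
  have habsle' : ‖(u - w) / (2 * (a : ℂ))‖ ≤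
      ‖(u + w) / (2 * (a : ℂ))‖ := by
    rw [norm_div, norm_div]
    have hpos : 0 < ‖2 * (a : ℂ)‖ :=
      norm_pos_iff.mpr ha2
    gcongr
  set x := ‖(u - w) / (2 * (a : ℂ))‖
  set y := ‖(u + w) / (2 * (a : ℂ))‖
  have hx : 0 ≤ x := norm_nonneg _
  have hy : 0 ≤ y := norm_nonneg _
  constructor
  · nlinarith
  · nlinarith
end

section
/- Let a > 0, ε > 0, b = −(2 + ε)a, and s = σ + iω ∈ ℂ with σ ≥ 0. Let α, β ∈ ℝ with α > 0 and β < 0. Then for every n ∈ ℕ the modulus of the convergence factor of the OWR algorithm with overlap n satisfies |ρ_n(s, α, β)| < 1, where ρ_n(s, α, β) = ((α + 1 − λ₁)/(λ₁(1 + α) − 1)) · ((λ₁ + β − 1)/(1 + (β − 1)λ₁)) · (1/λ₁²)ⁿ with λ₁ = λ₁(s). -/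
/-- The root `λ₁(s) = ((s - b) + √((b - s)² - 4a²))/(2a)` of the characteristic equation,
with the principal branch of the complex square root. -/
noncomputable def lam1 (a b : ℝ) (s : ℂ) : ℂ :=
  ((s - (b : ℂ)) + (((b : ℂ) - s) ^ 2 - 4 * (a : ℂ) ^ 2) ^ ((1 : ℂ) / 2)) / (2 * (a : ℂ))

/-- The convergence factor of the OWR algorithm with overlap `n` and parameters `α, β`:
`ρ_n(s,α,β) = ((α+1-λ₁)/(λ₁(1+α)-1)) ((λ₁+β-1)/(1+(β-1)λ₁)) (1/λ₁²)ⁿ` with `λ₁ = λ₁(s)`. -/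
noncomputable def rhoOWR (a b : ℝ) (n : ℕ) (s : ℂ) (α β : ℝ) : ℂ :=
  (((α : ℂ) + 1 - lam1 a b s) / (lam1 a b s * (1 + (α : ℂ)) - 1)) *
    ((lam1 a b s + (β : ℂ) - 1) / (1 + ((β : ℂ) - 1) * lam1 a b s)) *
    (1 / (lam1 a b s) ^ 2) ^ n

/-- The real part of the principal square root (via `cpow`) is nonnegative. -/
lemma re_cpow_half_nonneg (w : ℂ) : 0 ≤ (w ^ ((1 : ℂ) / 2)).re := by
  rcases eq_or_ne w 0 with rfl | hw
  · rw [Complex.zero_cpow (by norm_num)]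
    simp
  · rw [Complex.cpow_def_of_ne_zero hw]
    rw [Complex.exp_re]
    apply mul_nonneg (Real.exp_pos _).le
    apply Real.cos_nonneg_of_mem_Icc
    constructor
    · have := Complex.neg_pi_lt_arg w
      simp [Complex.log_im]
      nlinarith [Real.pi_pos]
    · have := Complex.arg_le_pi w
      simp [Complex.log_im]
      nlinarith [Real.pi_pos]

/-- For `a > 0`, `ε > 0`, `b = -(2 + ε)a`, `Re s ≥ 0`, `α > 0` and `β < 0`, the modulus of
the OWR convergence factor with any overlap `n ∈ ℕ` is strictly less than 1. -/
theorem owr_convergence_factor_lt_one (a ε α β : ℝ) (ha : 0 < a) (hε : 0 < ε)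
    (hα : 0 < α) (hβ : β < 0) (s : ℂ) (hs : 0 ≤ s.re) (n : ℕ) :
    ‖rhoOWR a (-(2 + ε) * a) n s α β‖ < 1 := by
  set b : ℝ := -(2 + ε) * a with hb
  set L : ℂ := lam1 a b s with hL
  -- Step 1 : 1 < L.re, hence 1 < |L|
  have hre : 1 < L.re := by
    have h2a : (2 : ℝ) * a ≠ 0 := by positivity
    have hLre : L.re = ((s - (b : ℂ)) +
        (((b : ℂ) - s) ^ 2 - 4 * (a : ℂ) ^ 2) ^ ((1 : ℂ) / 2)).re / (2 * a) := by
      rw [hL, lam1]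
      rw [show (2 * (a : ℂ)) = ((2 * a : ℝ) : ℂ) by push_cast; ring]
      rw [Complex.div_ofReal_re]
    rw [hLre]
    rw [Complex.add_re, Complex.sub_re, Complex.ofReal_re]
    have h1 : 0 ≤ ((((b : ℂ) - s) ^ 2 - 4 * (a : ℂ) ^ 2) ^ ((1 : ℂ) / 2)).re :=
      re_cpow_half_nonneg _
    have h2 : (2 + ε) * a ≤ s.re - b := by
      rw [hb]; nlinarith
    rw [lt_div_iff₀ (by positivity : (0:ℝ) < 2 * a)]
    nlinarith
  have habs : 1 < ‖L‖ := lt_of_lt_of_le hre (Complex.re_le_norm L)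
  have hns : 1 < Complex.normSq L := by
    have := Complex.sq_norm L
    nlinarith [norm_nonneg L]
  -- Step 2 : the two Möbius factors
  have key : ∀ c : ℝ, 1 < c ^ 2 →
      ‖(L - (c : ℂ)) / ((c : ℂ) * L - 1)‖ < 1 := by
    intro c hc
    have hlt : ‖L - (c : ℂ)‖ < ‖(c : ℂ) * L - 1‖ := by
      have h1 : Complex.normSq (L - (c : ℂ)) < Complex.normSq ((c : ℂ) * L - 1) := by
        simp only [Complex.normSq_apply, Complex.sub_re, Complex.sub_im, Complex.mul_re,
          Complex.mul_im, Complex.ofReal_re, Complex.ofReal_im, Complex.one_re, Complex.one_im]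
        have hns' : 1 < L.re ^ 2 + L.im ^ 2 := by
          have := hns; simp only [Complex.normSq_apply] at this; nlinarith
        nlinarith [hns', hc]
      have := Complex.sq_norm (L - (c : ℂ))
      have := Complex.sq_norm ((c : ℂ) * L - 1)
      nlinarith [norm_nonneg (L - (c : ℂ)), norm_nonneg ((c : ℂ) * L - 1)]
    rw [norm_div]
    exact div_lt_one (lt_of_le_of_lt (norm_nonneg _) hlt) |>.2 hlt
  have hf1 : ‖((α : ℂ) + 1 - L) / (L * (1 + (α : ℂ)) - 1)‖ < 1 := by
    have := key (1 + α) (by nlinarith)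
    have e1 : ((α : ℂ) + 1 - L) = -(L - ((1 + α : ℝ) : ℂ)) := by push_cast; ring
    have e2 : (L * (1 + (α : ℂ)) - 1) = (((1 + α : ℝ) : ℂ) * L - 1) := by push_cast; ring
    rw [e1, e2, neg_div, norm_neg]
    exact this
  have hf2 : ‖(L + (β : ℂ) - 1) / (1 + ((β : ℂ) - 1) * L)‖ < 1 := by
    have := key (1 - β) (by nlinarith)
    have e1 : (L + (β : ℂ) - 1) = (L - ((1 - β : ℝ) : ℂ)) := by push_cast; ring
    have e2 : (1 + ((β : ℂ) - 1) * L) = -(((1 - β : ℝ) : ℂ) * L - 1) := by push_cast; ring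
    rw [e1, e2, div_neg, norm_neg]
    exact this
  have hf3 : ‖(1 / L ^ 2) ^ n‖ ≤ 1 := by
    rw [norm_pow]
    apply pow_le_one₀ (norm_nonneg _)
    rw [norm_div, norm_one, norm_pow]
    rw [div_le_one (by positivity)]
    nlinarith
  have hrho : rhoOWR a b n s α β =
      (((α : ℂ) + 1 - L) / (L * (1 + (α : ℂ)) - 1)) *
      ((L + (β : ℂ) - 1) / (1 + ((β : ℂ) - 1) * L)) * (1 / L ^ 2) ^ n := rfl
  rw [hrho, norm_mul, norm_mul]
  have hA0 := norm_nonneg (((α : ℂ) + 1 - L) / (L * (1 + (α : ℂ)) - 1))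
  have hB0 := norm_nonneg ((L + (β : ℂ) - 1) / (1 + ((β : ℂ) - 1) * L))
  have h12 := mul_le_of_le_one_right hA0 hf2.le
  have h12' := lt_of_le_of_lt h12 hf1
  have h123 := mul_le_of_le_one_right (mul_nonneg hA0 hB0) hf3
  exact lt_of_le_of_lt h123 h12'
end

section
/- Let a > 0 and for ε > 0 set b = −(2 + ε)a and α*₀(ε) = √2 ε^{1/4}. Then as ε → 0⁺, the non-overlapping OWR convergence factor with β = −α*₀ equi-oscillates asymptotically between ω = 0 and ω = ∞ at the value 1 − 2√2 ε^{1/4}: namely |ρ₀(0, α*₀(ε), −α*₀(ε))| = 1 − 2√2 ε^{1/4} + O(ε^{1/2}) and lim_{ω → +∞} |ρ₀(iω, α*₀(ε), −α*₀(ε))| = 1/(1 + √2 ε^{1/4})² = 1 − 2√2 ε^{1/4} + O(ε^{1/2}). -/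
/-- The non-overlapping OWR convergence factor with `β = -α`:
`ρ₀(s, α, -α) = ((α+1-λ₁(s))/((1+α)λ₁(s)-1))²`. -/
noncomputable def rho0 (a b : ℝ) (s : ℂ) (α : ℝ) : ℂ :=
  (((α : ℂ) + 1 - lam1 a b s) / ((1 + (α : ℂ)) * lam1 a b s - 1)) ^ 2

/-- `λ₁(0) = (2 + ε + √(4ε + ε²))/2`, the real root greater than 1 of
`a y² + b y + a = 0` with `b = -(2 + ε)a`. -/
noncomputable def lam1Zero (ε : ℝ) : ℝ :=
  (2 + ε + Real.sqrt (4 * ε + ε ^ 2)) / 2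


lemma im_cpow_half_nonneg (z : ℂ) (hz : 0 < z.im) : 0 ≤ (z ^ ((1:ℂ)/2)).im := by
  have hz0 : z ≠ 0 := fun h => by simp [h] at hz
  rw [Complex.cpow_def_of_ne_zero hz0, Complex.exp_im]
  have him : (Complex.log z * (1/2)).im = z.arg / 2 := by
    have : ((1:ℂ)/2).im = 0 := by norm_num
    have h2 : ((1:ℂ)/2).re = 1/2 := by norm_num
    rw [Complex.mul_im, this, h2, Complex.log_im]; ring
  rw [him]
  have harg0 : 0 ≤ z.arg := Complex.arg_nonneg_iff.2 hz.le
  have hargpi : z.arg ≤ Real.pi := Complex.arg_le_pi z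
  exact mul_nonneg (Real.exp_nonneg _)
    (Real.sin_nonneg_of_nonneg_of_le_pi (by linarith) (by linarith [Real.pi_pos]))


lemma lam1_im_ge (a b : ℝ) (ha : 0 < a) (hb : b < 0) (ω : ℝ) (hω : 0 < ω) :
    ω / (2*a) ≤ (lam1 a b (Complex.I * ω)).im := by
  have hbase : ((((b:ℂ) - Complex.I * ω) ^ 2 - 4 * (a:ℂ) ^ 2)).im = -2*b*ω := by
    simp [pow_two, Complex.mul_im, Complex.mul_re, Complex.sub_im, Complex.sub_re]
    ring
  have hpos : 0 < ((((b:ℂ) - Complex.I * ω) ^ 2 - 4 * (a:ℂ) ^ 2)).im := by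
    rw [hbase]; nlinarith
  have hw := im_cpow_half_nonneg _ hpos
  have h2a : (2 * (a:ℂ)) = ((2*a : ℝ) : ℂ) := by push_cast; ring
  rw [lam1, h2a, Complex.div_ofReal_im]
  have hnum : ((Complex.I * ω - (b:ℂ)) + (((b:ℂ) - Complex.I * ω) ^ 2 - 4 * (a:ℂ) ^ 2) ^ ((1:ℂ)/2)).im
      = ω + (((((b:ℂ) - Complex.I * ω) ^ 2 - 4 * (a:ℂ) ^ 2)) ^ ((1:ℂ)/2)).im := by
    simp [Complex.add_im, Complex.sub_im, Complex.mul_im]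
  rw [hnum]
  have h2a' : 0 < 2*a := by linarith
  exact (div_le_div_iff_of_pos_right h2a').2 (by linarith)

set_option maxHeartbeats 1000000 in
theorem polyKey (u e r : ℝ) (hu : 0 < u) (hu8 : u ≤ 1/8) (hr2 : r^2 = 2) (hr1 : 1 ≤ r) (hr3 : r ≤ 3/2)
    (he0 : 0 ≤ e) (he : e ≤ u^4) :
    |(r*u + 1 - (1+u^2+e))^2 - (1-2*(r*u))*((1+r*u)*(1+u^2+e)-1)^2| ≤ 100*u^4 := by
  have hu1 : u ≤ 1 := by linarith
  have key : (r*u + 1 - (1+u^2+e))^2 - (1-2*(r*u))*((1+r*u)*(1+u^2+e)-1)^2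
      = -4*(r*(u*e)) + 4*(u^2*e) + 6*(u^2*e^2) + 8*(r*(u^3*e)) + 4*(r*(u^3*e^2))
        + 4*u^4 + 12*(u^4*e) + 8*(r*u^5) + 8*(r*(u^5*e)) + 6*u^6 + 4*(r*u^7) := by
    linear_combination (2*u^2*e + 3*u^2*e^2 + 2*u^3*r + 4*u^3*e*r + 2*u^3*e^2*r
      + 2*u^4 + 6*u^4*e + 4*u^5*r + 4*u^5*e*r + 3*u^6 + 2*u^7*r) * hr2
  rw [key, abs_le]
  have hxe : ∀ k : ℕ, 4 ≤ k → u^k ≤ u^4 := fun k hk => pow_le_pow_of_le_one hu.le hu1 hk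
  have hee : e^2 ≤ u^8 := by
    calc e^2 ≤ (u^4)^2 := by apply sq_le_sq' <;> nlinarith [pow_nonneg hu.le 4]
      _ = u^8 := by ring
  have he2 : (0:ℝ) ≤ e^2 := sq_nonneg e
  have bnd : ∀ k : ℕ, u^k*e ≤ u^4 ∧ u^k*e^2 ≤ u^4 ∧ 0 ≤ u^k*e ∧ 0 ≤ u^k*e^2 := by
    intro k
    have hk0 : (0:ℝ) ≤ u^k := pow_nonneg hu.le k
    have huk : u^k ≤ 1 := pow_le_one₀ hu.le hu1
    refine ⟨?_, ?_, mul_nonneg hk0 he0, mul_nonneg hk0 he2⟩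
    · calc u^k*e ≤ 1*u^4 := mul_le_mul huk he he0 zero_le_one
        _ = u^4 := one_mul _
    · calc u^k*e^2 ≤ 1*u^8 := mul_le_mul huk hee he2 zero_le_one
        _ = u^8 := one_mul _
        _ ≤ u^4 := hxe 8 (by norm_num)
  obtain ⟨b1, b2, p1, p2⟩ := bnd 2
  obtain ⟨b3, b4, p3, p4⟩ := bnd 3
  obtain ⟨b5, -, p5, -⟩ := bnd 4
  obtain ⟨b6, -, p6, -⟩ := bnd 5
  obtain ⟨b7, -, p7, -⟩ := bnd 1
  have h5 := hxe 5 (by norm_num); have h6 := hxe 6 (by norm_num)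
  have h7 := hxe 7 (by norm_num)
  have hp5 : (0:ℝ) ≤ u^5 := pow_nonneg hu.le 5
  have hp7 : (0:ℝ) ≤ u^7 := pow_nonneg hu.le 7
  have hr0 : (0:ℝ) ≤ r := by linarith
  -- r * x bounds : for 0 ≤ x ≤ u^4, r*x ≤ (3/2)*u^4 and 0 ≤ r*x
  have rb : ∀ x : ℝ, 0 ≤ x → x ≤ u^4 → r*x ≤ (3/2)*u^4 ∧ 0 ≤ r*x := by
    intro x hx hxu
    exact ⟨by calc r*x ≤ (3/2)*x := mul_le_mul_of_nonneg_right hr3 hx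
        _ ≤ (3/2)*u^4 := by linarith, mul_nonneg hr0 hx⟩
  obtain ⟨c3, d3⟩ := rb _ p3 b3
  obtain ⟨c4, d4⟩ := rb _ p4 b4
  obtain ⟨c6, d6⟩ := rb _ hp5 h5
  obtain ⟨c7, d7⟩ := rb _ p6 b6
  obtain ⟨c9, d9⟩ := rb _ hp7 h7
  obtain ⟨c0, d0⟩ := rb _ p7 b7
  have hu4 : (0:ℝ) ≤ u^4 := pow_nonneg hu.le 4
  have hu6 : (0:ℝ) ≤ u^6 := pow_nonneg hu.le 6
  constructor <;> linarith



lemma part2 (a b : ℝ) (ha : 0 < a) (hb : b < 0) (α : ℝ) (hα : 0 < α) :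
    Filter.Tendsto (fun ω : ℝ => ‖rho0 a b (Complex.I * (ω : ℂ)) α‖)
      Filter.atTop (nhds (1 / (1 + α) ^ 2)) := by
  set L : ℝ → ℂ := fun ω => lam1 a b (Complex.I * ω) with hL
  have hLlb : ∀ ω : ℝ, 0 < ω → ω / (2*a) ≤ ‖L ω‖ := fun ω hω =>
    le_trans (lam1_im_ge a b ha hb ω hω) (le_trans (le_abs_self _) (Complex.abs_im_le_norm _))
  have hLne : ∀ ω : ℝ, 0 < ω → L ω ≠ 0 := by
    intro ω hω h
    have := hLlb ω hω
    rw [h] at this; simp at this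
    have h2 : 0 < ω/(2*a) := by positivity
    linarith
  -- inverse tends to 0
  have hinv : Filter.Tendsto (fun ω : ℝ => (L ω)⁻¹) Filter.atTop (nhds 0) := by
    refine squeeze_zero_norm' (a := fun ω : ℝ => (2*a) / ω) ?_ ?_
    · filter_upwards [Filter.eventually_gt_atTop 0] with ω hω
      have h1 := hLlb ω hω
      have h2 : 0 < ω / (2*a) := by positivity
      rw [norm_inv]
      calc (‖L ω‖)⁻¹ ≤ (ω / (2*a))⁻¹ := inv_anti₀ h2 h1
        _ = 2*a/ω := by field_simp
    · exact Filter.Tendsto.div_atTop tendsto_const_nhds Filter.tendsto_id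
  set A : ℂ := (α : ℂ) with hA
  have hA1 : (1 : ℂ) + A ≠ 0 := by
    rw [hA]
    intro h
    have h' := congrArg Complex.re h
    simp at h'
    linarith
  -- limit function of v near 0
  have h2 : Filter.Tendsto (fun v : ℂ => (((A+1)*v - 1)/((1+A) - v))^2) (nhds 0)
      (nhds ((1/(1+A))^2)) := by
    have hnum : Filter.Tendsto (fun v : ℂ => (A+1)*v - 1) (nhds 0) (nhds (-1)) := by
      have : Filter.Tendsto (fun v : ℂ => (A+1)*v - 1) (nhds 0) (nhds ((A+1)*0 - 1)) :=
        (Filter.tendsto_id.const_mul _).sub_const 1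
      simpa using this
    have hden : Filter.Tendsto (fun v : ℂ => (1+A) - v) (nhds 0) (nhds (1+A)) := by
      have : Filter.Tendsto (fun v : ℂ => (1+A) - v) (nhds 0) (nhds ((1+A) - 0)) :=
        (tendsto_const_nhds (α := ℂ)).sub Filter.tendsto_id
      simpa using this
    have := (hnum.div hden hA1).pow 2
    convert this using 2
    rw [Pi.div_apply, div_pow]
    ring_nf
  have hcomp := h2.comp hinv
  have heq : (fun ω : ℝ => rho0 a b (Complex.I * ω) α)
      =ᶠ[Filter.atTop] (fun ω : ℝ => (((A+1)*(L ω)⁻¹ - 1)/((1+A) - (L ω)⁻¹))^2) := by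
    filter_upwards [Filter.eventually_gt_atTop 0] with ω hω
    have hne := hLne ω hω
    have hinvne : (L ω)⁻¹ ≠ 0 := inv_ne_zero hne
    rw [rho0]
    have e1 : (A + 1 - L ω) = L ω * ((A+1)*(L ω)⁻¹ - 1) := by
      field_simp
    have e2 : ((1+A) * L ω - 1) = L ω * ((1+A) - (L ω)⁻¹) := by
      field_simp
    rw [e1, e2, mul_div_mul_left _ _ hne]
  have hrho : Filter.Tendsto (fun ω : ℝ => rho0 a b (Complex.I * ω) α) Filter.atTop
      (nhds ((1/(1+A))^2)) := Filter.Tendsto.congr' heq.symm hcomp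
  have habs := (continuous_norm.tendsto _).comp hrho
  have : ‖(1/(1+A))^2‖ = 1/(1+α)^2 := by
    rw [norm_pow, norm_div, norm_one, hA,
      show (1:ℂ) + (α:ℂ) = ((1+α:ℝ):ℂ) by push_cast; ring, Complex.norm_real, Real.norm_eq_abs,
      abs_of_pos (by linarith : (0:ℝ) < 1+α), div_pow, one_pow]
  rw [← this]
  exact habs




set_option maxHeartbeats 1000000 in
lemma part1 (ε : ℝ) (hε : 0 < ε) (hε0 : ε < 1/4096) :
    |((Real.sqrt 2 * ε ^ ((1 : ℝ) / 4) + 1 - lam1Zero ε) /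
        ((1 + Real.sqrt 2 * ε ^ ((1 : ℝ) / 4)) * lam1Zero ε - 1)) ^ 2
      - (1 - 2 * Real.sqrt 2 * ε ^ ((1 : ℝ) / 4))| ≤ 100 * ε ^ ((1 : ℝ) / 2) := by
  set r := Real.sqrt 2 with hrdef
  set u := ε ^ ((1:ℝ)/4) with hudef
  have hu : 0 < u := Real.rpow_pos_of_pos hε _
  have hr2 : r^2 = 2 := Real.sq_sqrt (by norm_num)
  have hr0 : 0 ≤ r := Real.sqrt_nonneg 2
  have hr1 : 1 ≤ r := by nlinarith
  have hr3 : r ≤ 3/2 := by nlinarith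
  have hu4 : u^4 = ε := by
    rw [hudef, ← Real.rpow_natCast (ε ^ ((1:ℝ)/4)) 4, ← Real.rpow_mul hε.le]
    norm_num
  have hu2 : u^2 = ε ^ ((1:ℝ)/2) := by
    rw [hudef, ← Real.rpow_natCast (ε ^ ((1:ℝ)/4)) 2, ← Real.rpow_mul hε.le]
    norm_num
  have hu8 : u ≤ 1/8 := by
    have h1 : ε ^ ((1:ℝ)/4) ≤ (1/4096 : ℝ) ^ ((1:ℝ)/4) :=
      Real.rpow_le_rpow hε.le hε0.le (by norm_num)
    have h2 : ((1/4096 : ℝ)) ^ ((1:ℝ)/4) = 1/8 := by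
      rw [show (1/4096:ℝ) = (1/8:ℝ)^(4:ℕ) by norm_num,
        ← Real.rpow_natCast (1/8:ℝ) 4, ← Real.rpow_mul (by norm_num)]
      norm_num
    rw [hudef]; linarith [h2 ▸ h1]
  -- sqrt bounds
  set s := Real.sqrt (4 * ε + ε ^ 2) with hsdef
  have hs1 : 2*u^2 ≤ s := by
    rw [hsdef, Real.le_sqrt (by positivity) (by positivity)]
    nlinarith [pow_nonneg hu.le 8, hu4]
  have hs2 : s ≤ 2*u^2 + u^6 := by
    rw [hsdef]
    calc Real.sqrt (4 * ε + ε^2) ≤ Real.sqrt ((2*u^2 + u^6)^2) := by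
          apply Real.sqrt_le_sqrt
          nlinarith [pow_nonneg hu.le 8, pow_nonneg hu.le 12, hu4]
      _ = 2*u^2 + u^6 := Real.sqrt_sq (by positivity)
  -- identify lam1Zero ε = 1 + u^2 + e
  set e := lam1Zero ε - 1 - u^2 with hedef
  have hLe : lam1Zero ε = 1 + u^2 + e := by rw [hedef]; ring
  have hL : lam1Zero ε = 1 + u^4/2 + s/2 := by
    rw [lam1Zero, ← hsdef, ← hu4]; ring
  have hu6le : u^6 ≤ u^4 := by nlinarith [pow_nonneg hu.le 4, sq_nonneg u]
  have he0 : 0 ≤ e := by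
    rw [hedef, hL]; nlinarith [pow_nonneg hu.le 4]
  have he : e ≤ u^4 := by
    rw [hedef, hL]; nlinarith
  -- denominator bounds
  have hDpos : r*u ≤ (1 + r*u) * lam1Zero ε - 1 := by
    rw [hLe]
    nlinarith [mul_nonneg (mul_nonneg hr0 hu.le) (by positivity : (0:ℝ) ≤ u^2),
      mul_nonneg (mul_nonneg hr0 hu.le) he0, sq_nonneg u]
  set D := (1 + r*u) * lam1Zero ε - 1 with hDdef
  have hD0 : 0 < D := lt_of_lt_of_le (by positivity) hDpos
  have hD2 : 2*u^2 ≤ D^2 := by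
    have h := mul_le_mul hDpos hDpos (by positivity) hD0.le
    nlinarith [h, hr2]
  have hkey := polyKey u e r hu hu8 hr2 hr1 hr3 he0 he
  rw [← hLe] at hkey
  -- final
  have hgoal : ((r*u + 1 - lam1Zero ε) / D)^2 - (1 - 2*r*u)
      = ((r*u + 1 - lam1Zero ε)^2 - (1-2*(r*u))*D^2) / D^2 := by
    field_simp
  rw [hgoal, abs_div, abs_of_pos (by positivity : (0:ℝ) < D^2)]
  rw [div_le_iff₀ (by positivity : (0:ℝ) < D^2)]
  have h1 : |(r*u + 1 - lam1Zero ε)^2 - (1-2*(r*u))*D^2| ≤ 100*u^4 := hkey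
  calc |(r*u + 1 - lam1Zero ε)^2 - (1-2*(r*u))*D^2| ≤ 100*u^4 := h1
    _ = 50*u^2 * (2*u^2) := by ring
    _ ≤ 100 * ε^((1:ℝ)/2) * D^2 := by
        rw [← hu2]
        nlinarith [mul_le_mul_of_nonneg_left hD2 (by positivity : (0:ℝ) ≤ 50*u^2)]

lemma part3 (ε : ℝ) (hε : 0 < ε) (hε1 : ε < 1) :
    |1 / (1 + Real.sqrt 2 * ε ^ ((1 : ℝ) / 4)) ^ 2
      - (1 - 2 * Real.sqrt 2 * ε ^ ((1 : ℝ) / 4))| ≤ 100 * ε ^ ((1 : ℝ) / 2) := by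
  set r := Real.sqrt 2 with hrdef
  set u := ε ^ ((1:ℝ)/4) with hudef
  have hu : 0 < u := Real.rpow_pos_of_pos hε _
  have hr2 : r^2 = 2 := Real.sq_sqrt (by norm_num)
  have hr0 : 0 ≤ r := Real.sqrt_nonneg 2
  have hr1 : 1 ≤ r := by nlinarith
  have hr3 : r ≤ 3/2 := by nlinarith
  have hu2 : u^2 = ε ^ ((1:ℝ)/2) := by
    rw [hudef, ← Real.rpow_natCast (ε ^ ((1:ℝ)/4)) 2, ← Real.rpow_mul hε.le]
    norm_num
  have hu1 : u ≤ 1 := by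
    rw [hudef]
    calc ε ^ ((1:ℝ)/4) ≤ (1:ℝ) ^ ((1:ℝ)/4) := Real.rpow_le_rpow hε.le hε1.le (by norm_num)
      _ = 1 := Real.one_rpow _
  set t := r * u with htdef
  have ht : 0 < t := mul_pos (lt_of_lt_of_le one_pos hr1) hu
  have hden : (0:ℝ) < (1 + t)^2 := by positivity
  have heq : 1 / (1 + t) ^ 2 - (1 - 2 * t) = (3*t^2 + 2*t^3) / (1 + t)^2 := by
    field_simp
    ring
  rw [show 2 * r * u = 2 * t by rw [htdef]; ring] at *
  rw [heq, abs_of_nonneg (by positivity)]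
  have h1 : (3*t^2 + 2*t^3) / (1 + t)^2 ≤ 3*t^2 + 2*t^3 := by
    apply div_le_self (by positivity)
    nlinarith
  have ht2 : t^2 = 2*u^2 := by rw [htdef]; nlinarith [hr2]
  have htle : t ≤ 3/2 := by
    rw [htdef]
    calc r * u ≤ (3/2) * 1 := mul_le_mul hr3 hu1 hu.le (by norm_num)
      _ = 3/2 := by norm_num
  have ht3 : t^3 ≤ 4*u^2 := by
    have h : t^3 = t * (2*u^2) := by rw [← ht2]; ring
    rw [h]
    have h2 := mul_le_mul_of_nonneg_right htle (by positivity : (0:ℝ) ≤ 2*u^2)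
    nlinarith [sq_nonneg u]
  calc (3*t^2 + 2*t^3) / (1 + t)^2 ≤ 3*t^2 + 2*t^3 := h1
    _ ≤ 3*(2*u^2) + 2*(4*u^2) := by nlinarith
    _ ≤ 100 * u^2 := by nlinarith [sq_nonneg u]
    _ = 100 * ε ^ ((1:ℝ)/2) := by rw [hu2]


/-- With `α*₀(ε) = √2 ε^{1/4}` and `β = -α*₀`, the non-overlapping OWR convergence factor
equi-oscillates asymptotically between `ω = 0` and `ω = ∞` at the value `1 - 2√2 ε^{1/4}`:
`|ρ₀(0, α*₀, -α*₀)| = 1 - 2√2 ε^{1/4} + O(ε^{1/2})` and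
`lim_{ω → ∞} |ρ₀(iω, α*₀, -α*₀)| = 1/(1 + √2 ε^{1/4})² = 1 - 2√2 ε^{1/4} + O(ε^{1/2})`. -/
theorem rho0_equioscillation (a : ℝ) (ha : 0 < a) :
    (∃ C > (0 : ℝ), ∃ ε₀ > (0 : ℝ), ∀ ε : ℝ, 0 < ε → ε < ε₀ →
      |((Real.sqrt 2 * ε ^ ((1 : ℝ) / 4) + 1 - lam1Zero ε) /
          ((1 + Real.sqrt 2 * ε ^ ((1 : ℝ) / 4)) * lam1Zero ε - 1)) ^ 2
        - (1 - 2 * Real.sqrt 2 * ε ^ ((1 : ℝ) / 4))| ≤ C * ε ^ ((1 : ℝ) / 2)) ∧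
    (∀ ε : ℝ, 0 < ε →
      Filter.Tendsto
        (fun ω : ℝ => ‖
          (rho0 a (-(2 + ε) * a) (Complex.I * (ω : ℂ)) (Real.sqrt 2 * ε ^ ((1 : ℝ) / 4)))‖)
        Filter.atTop (nhds (1 / (1 + Real.sqrt 2 * ε ^ ((1 : ℝ) / 4)) ^ 2))) ∧
    (∃ C > (0 : ℝ), ∃ ε₀ > (0 : ℝ), ∀ ε : ℝ, 0 < ε → ε < ε₀ →
      |1 / (1 + Real.sqrt 2 * ε ^ ((1 : ℝ) / 4)) ^ 2
        - (1 - 2 * Real.sqrt 2 * ε ^ ((1 : ℝ) / 4))| ≤ C * ε ^ ((1 : ℝ) / 2)) := by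
  refine ⟨⟨100, by norm_num, 1/4096, by norm_num, fun ε hε hε0 => part1 ε hε hε0⟩, ?_, 
    ⟨100, by norm_num, 1, by norm_num, fun ε hε hε1 => part3 ε hε hε1⟩⟩
  intro ε hε
  have hb : -(2 + ε) * a < 0 := by nlinarith
  have hα : 0 < Real.sqrt 2 * ε ^ ((1:ℝ)/4) := by
    have h1 : (0:ℝ) < Real.sqrt 2 := Real.sqrt_pos.2 (by norm_num)
    have h2 : (0:ℝ) < ε ^ ((1:ℝ)/4) := Real.rpow_pos_of_pos hε _
    positivity
  exact part2 a (-(2 + ε) * a) ha hb _ hα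
end
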